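/- Let Y ~ χ₃ and U₁,…,U_p be i.i.d. Uniform[-1,1], all mutually independent, and set Xᵢ = Y·Uᵢ. Then (X₁,…,X_p) has joint density f_p(x) = (2^{p-1}√(2π))⁻¹ ∫_{‖x‖_∞}^∞ y^{2-p} e^{-y²/2} dy, where ‖x‖_∞ = max_i |xᵢ|. -/

import Mathlib

open MeasureTheory ProbabilityTheory

/-- The chi distribution with 3 degrees of freedom, as a measure on ℝ. -/
noncomputable def chi3 : Measure ℝ :=
  volume.withDensity (fun y =>
    ENNReal.ofReal (if 0 < y then Real.sqrt (2 / Real.pi) * y ^ 2 * Real.exp (-y ^ 2 / 2) else 0))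

/-- The uniform distribution on [-1, 1]. -/
noncomputable def unif : Measure ℝ := (2 : ENNReal)⁻¹ • volume.restrict (Set.Icc (-1 : ℝ) 1)

/-- The Khintchine mixture density in `p` dimensions; `‖x‖` on `Fin p → ℝ` is the sup norm. -/
noncomputable def khintchineDensity (p : ℕ) (x : Fin p → ℝ) : ℝ :=
  ((2 : ℝ) ^ ((p : ℝ) - 1) * Real.sqrt (2 * Real.pi))⁻¹ *
    ∫ y in Set.Ioi ‖x‖, y ^ ((2 : ℝ) - (p : ℝ)) * Real.exp (-y ^ 2 / 2)

open Set

noncomputable def kphi : ℝ → ENNReal := fun y =>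
  ENNReal.ofReal (if 0 < y then Real.sqrt (2 / Real.pi) * y ^ 2 * Real.exp (-y ^ 2 / 2) else 0)

lemma measurable_kphi : Measurable kphi := by
  apply ENNReal.measurable_ofReal.comp
  exact Measurable.ite measurableSet_Ioi (by fun_prop) measurable_const

instance unif_prob : IsProbabilityMeasure unif := by
  constructor
  simp [unif, Real.volume_Icc]
  rw [show (1:ℝ) + 1 = 2 by norm_num, ENNReal.ofReal_ofNat,
    ENNReal.inv_mul_cancel (by norm_num) (by norm_num)]

lemma box_eq (p : ℕ) :
    (Set.pi Set.univ fun _ : Fin p => Set.Icc (-1:ℝ) 1) = Metric.closedBall 0 1 := by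
  ext x
  simp [Metric.mem_closedBall, dist_eq_norm, pi_norm_le_iff_of_nonneg (by norm_num : (0:ℝ) ≤ 1),
    Real.norm_eq_abs, abs_le, Set.mem_univ_pi, Set.mem_Icc, Pi.le_def, forall_and]

lemma pi_unif_eq (p : ℕ) :
    (Measure.pi fun _ : Fin p => unif)
      = ((2:ENNReal)⁻¹ ^ p) • (volume.restrict (Metric.closedBall (0 : Fin p → ℝ) 1)) := by
  rw [← box_eq]
  refine Measure.pi_eq fun s hs => ?_
  have hbox : MeasurableSet (Set.pi Set.univ fun _ : Fin p => Set.Icc (-1:ℝ) 1) :=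
    MeasurableSet.univ_pi fun _ => measurableSet_Icc
  rw [Measure.smul_apply, Measure.restrict_apply' hbox, ← Set.pi_inter_distrib]
  rw [show (volume : Measure (Fin p → ℝ)) = Measure.pi fun _ => volume from volume_pi,
    Measure.pi_pi]
  rw [smul_eq_mul]
  rw [show ((2:ENNReal)⁻¹ ^ p) = ∏ _i : Fin p, (2:ENNReal)⁻¹ by
    simp [Finset.prod_const, Finset.card_univ]]
  rw [← Finset.prod_mul_distrib]
  refine Finset.prod_congr rfl fun i _ => ?_
  rw [unif, Measure.smul_apply, Measure.restrict_apply (hs i), smul_eq_mul]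

noncomputable def kPhi (p : ℕ) (y : ℝ) : ENNReal :=
  kphi y * ((2:ENNReal)⁻¹ ^ p * ENNReal.ofReal (y⁻¹ ^ p))

lemma measurable_kPhi (p : ℕ) : Measurable (kPhi p) :=
  measurable_kphi.mul (measurable_const.mul
    (ENNReal.measurable_ofReal.comp (measurable_inv.pow_const p)))

noncomputable def kW (p : ℕ) : ℝ × (Fin p → ℝ) → ENNReal :=
  fun q => ({q : ℝ × (Fin p → ℝ) | ‖q.2‖ ≤ q.1}).indicator (fun q => kPhi p q.1) q

lemma measurable_kW (p : ℕ) : Measurable (kW p) :=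
  Measurable.indicator ((measurable_kPhi p).comp measurable_fst)
    (isClosed_le (continuous_norm.comp continuous_snd) continuous_fst).measurableSet

lemma kW_eq (p : ℕ) (y : ℝ) (x : Fin p → ℝ) :
    kW p (y, x) = (Metric.closedBall (0 : Fin p → ℝ) y).indicator (fun _ => kPhi p y) x := by
  classical
  rw [kW, indicator_apply, indicator_apply]
  simp only [mem_setOf_eq, Metric.mem_closedBall, dist_zero_right]

lemma map_prod_eq (p : ℕ) :
    (chi3.prod (Measure.pi fun _ : Fin p => unif)).map
        (fun z : ℝ × (Fin p → ℝ) => fun i => z.1 * z.2 i)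
      = volume.withDensity (fun x => ∫⁻ y, kW p (y, x)) := by
  have hg' : Measurable (fun z : ℝ × (Fin p → ℝ) => fun i => z.1 * z.2 i) :=
    measurable_pi_lambda _ fun i =>
      measurable_fst.mul ((measurable_pi_apply i).comp measurable_snd)
  ext s hs
  have hpre : MeasurableSet ((fun z : ℝ × (Fin p → ℝ) => fun i => z.1 * z.2 i) ⁻¹' s) := hg' hs
  rw [Measure.map_apply hg' hs, withDensity_apply _ hs, Measure.prod_apply hpre,
    show chi3 = volume.withDensity kphi from rfl,
    lintegral_withDensity_eq_lintegral_mul volume measurable_kphi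
      (measurable_measure_prodMk_left hpre)]
  have key : ∀ y : ℝ,
      (kphi * fun y => (Measure.pi fun _ : Fin p => unif)
        (Prod.mk y ⁻¹' ((fun z : ℝ × (Fin p → ℝ) => fun i => z.1 * z.2 i) ⁻¹' s))) y
      = ∫⁻ x in s, kW p (y, x) := by
    intro y
    have hrw : ∫⁻ x in s, kW p (y, x)
        = kPhi p y * volume (Metric.closedBall (0 : Fin p → ℝ) y ∩ s) := by
      calc ∫⁻ x in s, kW p (y, x)
          = ∫⁻ x in s, (Metric.closedBall (0 : Fin p → ℝ) y).indicator (fun _ => kPhi p y) x := by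
            simp_rw [kW_eq]
        _ = ∫⁻ x in Metric.closedBall (0 : Fin p → ℝ) y, kPhi p y ∂(volume.restrict s) := by
            rw [lintegral_indicator measurableSet_closedBall]
        _ = kPhi p y * volume (Metric.closedBall (0 : Fin p → ℝ) y ∩ s) := by
            rw [setLIntegral_const, Measure.restrict_apply' hs]
    simp only [Pi.mul_apply]
    rw [hrw, pi_unif_eq p, Measure.smul_apply, Measure.restrict_apply'
      measurableSet_closedBall, smul_eq_mul]
    rcases le_or_gt y 0 with hy | hy
    · have h0 : kphi y = 0 := by simp [kphi, if_neg (not_lt.2 hy)]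
      rw [h0, zero_mul, kPhi, h0, zero_mul, zero_mul]
    · have hAB : Prod.mk y ⁻¹' ((fun z : ℝ × (Fin p → ℝ) => fun i => z.1 * z.2 i) ⁻¹' s)
          ∩ Metric.closedBall 0 1
          = (fun u : Fin p → ℝ => y • u) ⁻¹' (s ∩ Metric.closedBall 0 y) := by
        ext u
        have hsm : (fun i => y * u i) = y • u := rfl
        simp only [mem_inter_iff, mem_preimage, mem_closedBall_zero_iff, hsm,
          norm_smul, Real.norm_eq_abs, abs_of_pos hy]
        rw [mul_le_iff_le_one_right hy]
      rw [hAB, Measure.addHaar_preimage_smul volume (ne_of_gt hy), Module.finrank_fin_fun,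
        abs_of_pos (by positivity : (0:ℝ) < (y ^ p)⁻¹), ← inv_pow, kPhi, inter_comm s]
      ring
  rw [lintegral_congr key]
  have hswap := lintegral_lintegral_swap (μ := (volume : Measure ℝ))
    (ν := (volume : Measure (Fin p → ℝ)).restrict s)
    (f := fun y x => kW p (y, x)) ((measurable_kW p).aemeasurable)
  exact hswap

lemma rpow_helper {y : ℝ} (hy : 0 < y) (p : ℕ) :
    y ^ ((2:ℝ) - (p:ℝ)) = y ^ 2 * (y ^ p)⁻¹ := by
  rw [Real.rpow_sub hy, Real.rpow_two, Real.rpow_natCast, div_eq_mul_inv]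

lemma const_helper (p : ℕ) :
    Real.sqrt (2 / Real.pi) * (2:ℝ)⁻¹ ^ p
      = ((2 : ℝ) ^ ((p : ℝ) - 1) * Real.sqrt (2 * Real.pi))⁻¹ := by
  have h2 : (2:ℝ) ^ ((p:ℝ) - 1) = 2 ^ p / 2 := by
    rw [Real.rpow_sub (by norm_num), Real.rpow_one, Real.rpow_natCast]
  have hπ : (0:ℝ) < Real.pi := Real.pi_pos
  have hsπ : (0:ℝ) < Real.sqrt Real.pi := Real.sqrt_pos.2 hπ
  have hs2 : (0:ℝ) < Real.sqrt 2 := by positivity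
  have hss : Real.sqrt 2 * Real.sqrt 2 = 2 := Real.mul_self_sqrt (by norm_num)
  rw [h2, Real.sqrt_mul (by norm_num : (0:ℝ) ≤ 2), Real.sqrt_div (by norm_num : (0:ℝ) ≤ 2)]
  field_simp
  ring_nf
  rw [sq]
  have h12 : ((1:ℝ) / 2) ^ p * 2 ^ p = 1 := by rw [← mul_pow]; norm_num
  linear_combination hss + Real.sqrt 2 ^ 2 * h12

lemma integrableOn_kernel (p : ℕ) {r : ℝ} (hr : 0 < r) :
    IntegrableOn (fun y : ℝ => y ^ ((2:ℝ) - (p:ℝ)) * Real.exp (-y ^ 2 / 2)) (Ioi r) := by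
  have h2 : Integrable (fun y : ℝ => y ^ 2 * Real.exp (-y ^ 2 / 2)) := by
    refine (integrable_rpow_mul_exp_neg_mul_sq (b := 1/2) (by norm_num) (s := 2)
      (by norm_num)).congr (Filter.Eventually.of_forall fun y => ?_)
    show y ^ (2:ℝ) * Real.exp (-(1/2) * y ^ 2) = y ^ 2 * Real.exp (-y ^ 2 / 2)
    rw [Real.rpow_two, show -(1/2 : ℝ) * y ^ 2 = -y ^ 2 / 2 by ring]
  have hbase : IntegrableOn (fun y : ℝ => (r ^ p)⁻¹ * (y ^ 2 * Real.exp (-y ^ 2 / 2))) (Ioi r) :=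
    (h2.const_mul _).integrableOn
  refine Integrable.mono' hbase ?_ ?_
  · exact (by fun_prop :
      Measurable fun y : ℝ => y ^ ((2:ℝ) - (p:ℝ)) * Real.exp (-y ^ 2 / 2)).aestronglyMeasurable
  · refine (ae_restrict_iff' measurableSet_Ioi).2 (ae_of_all _ fun y hy => ?_)
    have hy0 : 0 < y := hr.trans hy
    rw [Real.norm_eq_abs, abs_of_nonneg (by positivity)]
    have hle : (y ^ p)⁻¹ ≤ (r ^ p)⁻¹ :=
      inv_anti₀ (by positivity) (pow_le_pow_left₀ hr.le (le_of_lt hy) p)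
    calc y ^ ((2:ℝ) - (p:ℝ)) * Real.exp (-y ^ 2 / 2)
        = (y ^ p)⁻¹ * (y ^ 2 * Real.exp (-y ^ 2 / 2)) := by rw [rpow_helper hy0]; ring
      _ ≤ (r ^ p)⁻¹ * (y ^ 2 * Real.exp (-y ^ 2 / 2)) :=
          mul_le_mul_of_nonneg_right hle (by positivity)

lemma lint_kW_eq (p : ℕ) (x : Fin p → ℝ) (hx : 0 < ‖x‖) :
    (∫⁻ y, kW p (y, x)) = ENNReal.ofReal (khintchineDensity p x) := by
  classical
  have h1 : (∫⁻ y, kW p (y, x)) = ∫⁻ y in Ici ‖x‖, kPhi p y := by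
    rw [← lintegral_indicator measurableSet_Ici]
    refine lintegral_congr fun y => ?_
    rw [kW, indicator_apply, indicator_apply]
    simp only [mem_setOf_eq, mem_Ici]
  have h2 : (volume : Measure ℝ).restrict (Ici ‖x‖) = volume.restrict (Ioi ‖x‖) :=
    (Measure.restrict_congr_set Ioi_ae_eq_Ici).symm
  rw [h1, h2]
  have h3 : ∀ y ∈ Ioi ‖x‖, kPhi p y
      = ENNReal.ofReal (((2 : ℝ) ^ ((p : ℝ) - 1) * Real.sqrt (2 * Real.pi))⁻¹ *
          (y ^ ((2:ℝ) - (p:ℝ)) * Real.exp (-y ^ 2 / 2))) := by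
    intro y hy
    have hy0 : 0 < y := hx.trans hy
    have e1 : kphi y
        = ENNReal.ofReal (Real.sqrt (2 / Real.pi) * y ^ 2 * Real.exp (-y ^ 2 / 2)) := by
      simp only [kphi, if_pos hy0]
    have e2 : ((2:ENNReal)⁻¹ ^ p) = ENNReal.ofReal ((2:ℝ)⁻¹ ^ p) := by
      rw [ENNReal.ofReal_pow (by norm_num), ENNReal.ofReal_inv_of_pos (by norm_num),
        ENNReal.ofReal_ofNat]
    rw [kPhi, e1, e2, ← ENNReal.ofReal_mul (by positivity), ← ENNReal.ofReal_mul (by positivity)]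
    congr 1
    rw [rpow_helper hy0, ← const_helper p]
    ring
  rw [setLIntegral_congr_fun measurableSet_Ioi h3,
    ← ofReal_integral_eq_lintegral_ofReal ((integrableOn_kernel p hx).const_mul _)
      ((ae_restrict_iff' measurableSet_Ioi).2 (ae_of_all _ fun y hy => by
        have hy0 : (0:ℝ) < y := hx.trans hy
        positivity)),
    integral_const_mul, khintchineDensity]


theorem khintchine_joint_density {Ω : Type*} [MeasureSpace Ω] (μ : Measure Ω)
    [IsProbabilityMeasure μ] (p : ℕ) (hp : 1 ≤ p)
    (Y : Ω → ℝ) (U : Fin p → Ω → ℝ) (hY : Measurable Y) (hU : ∀ i, Measurable (U i))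
    (hind : iIndepFun (Fin.cons Y U : Fin (p + 1) → Ω → ℝ) μ)
    (hYlaw : μ.map Y = chi3) (hUlaw : ∀ i, μ.map (U i) = unif) :
    μ.map (fun ω i => Y ω * U i ω) =
      volume.withDensity (fun x : Fin p → ℝ => ENNReal.ofReal (khintchineDensity p x)) := by
  set F : Fin (p + 1) → Ω → ℝ := Fin.cons Y U with hF
  have hF0 : F 0 = Y := Fin.cons_zero _ _
  have hFs : ∀ i : Fin p, F i.succ = U i := fun i => Fin.cons_succ _ _ _
  have hfm : ∀ j : Fin (p+1), Measurable (F j) := by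
    intro j
    refine Fin.cases (motive := fun j => Measurable (F j)) ?_ ?_ j
    · show Measurable (F 0); rw [hF0]; exact hY
    · intro i; show Measurable (F i.succ); rw [hFs i]; exact hU i
  have htuple : Measurable fun ω (j : Fin (p+1)) => F j ω :=
    measurable_pi_lambda _ hfm
  haveI : ∀ j, IsProbabilityMeasure (μ.map (F j)) :=
    fun j => Measure.isProbabilityMeasure_map (hfm j).aemeasurable
  have hg' : Measurable (fun z : ℝ × (Fin p → ℝ) => fun i => z.1 * z.2 i) :=
    measurable_pi_lambda _ fun i =>
      measurable_fst.mul ((measurable_pi_apply i).comp measurable_snd)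
  set e := MeasurableEquiv.piFinSuccAbove (fun _ : Fin (p+1) => ℝ) 0 with he
  -- Step A : joint law of the tuple is the product of the laws
  have hA : μ.map (fun ω (j : Fin (p+1)) => F j ω)
      = Measure.pi (fun j => μ.map (F j)) := by
    refine (Measure.pi_eq fun s hs => ?_).symm
    rw [Measure.map_apply htuple (MeasurableSet.univ_pi hs)]
    have hpre : (fun ω (j : Fin (p+1)) => F j ω) ⁻¹' (Set.pi Set.univ s)
        = ⋂ j ∈ Finset.univ, F j ⁻¹' (s j) := by
      ext ω; simp [Set.mem_univ_pi]
    rw [hpre, hind.measure_inter_preimage_eq_mul Finset.univ (fun j _ => hs j)]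
    exact Finset.prod_congr rfl fun j _ => (Measure.map_apply (hfm j) (hs j)).symm
  -- Step B : the product law, reorganized as a product measure
  have hB : (Measure.pi fun j => μ.map (F j)).map e
      = chi3.prod (Measure.pi fun _ : Fin p => unif) := by
    rw [(measurePreserving_piFinSuccAbove (fun j => μ.map (F j)) 0).map_eq]
    have h0 : μ.map (F 0) = chi3 := by rw [hF0]; exact hYlaw
    have hsucc : (fun j : Fin p => μ.map (F ((0 : Fin (p+1)).succAbove j)))
        = fun _ => unif := by
      funext j
      rw [Fin.succAbove_zero, hFs j]
      exact hUlaw j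
    rw [h0, hsucc]
  -- composition
  have hcomp : (fun ω (i : Fin p) => Y ω * U i ω)
      = (fun z : ℝ × (Fin p → ℝ) => fun i => z.1 * z.2 i) ∘
        (⇑e ∘ fun ω (j : Fin (p+1)) => F j ω) := by
    funext ω
    have h0 : (e fun j => F j ω).1 = Y ω := by
      simp [he, MeasurableEquiv.piFinSuccAbove, hF0]
    have hsucc : ∀ i : Fin p, (e fun j => F j ω).2 i = U i ω := by
      intro i
      simp [he, MeasurableEquiv.piFinSuccAbove, Fin.tail, hFs i]
    funext i
    simp only [Function.comp_apply, h0, hsucc]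
  rw [hcomp, ← Function.comp_assoc, ← Measure.map_map (hg'.comp e.measurable) htuple, hA,
    ← Measure.map_map hg' e.measurable, hB, map_prod_eq p]
  refine withDensity_congr_ae ?_
  have hzero : (volume : Measure (Fin p → ℝ)) {x | ¬ 0 < ‖x‖} = 0 := by
    have hsub : {x : Fin p → ℝ | ¬ 0 < ‖x‖} ⊆ {x | x ⟨0, hp⟩ = 0} := by
      intro x hx
      have h1 : ‖x‖ = 0 := le_antisymm (not_lt.1 hx) (norm_nonneg x)
      have h2 : x = 0 := norm_eq_zero.1 h1
      simp [h2]
    refine measure_mono_null hsub ?_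
    rw [volume_pi]
    exact Measure.pi_hyperplane _ _ 0
  filter_upwards [ae_iff.mpr hzero] with x hx using lint_kW_eq p x hx
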